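/- Let m ≥ 1 be an integer and η₁ > 0. Let B : ℝ → ℝ^{m×m} be continuously differentiable on [0,1], such that for every s ∈ [0,1] the matrix B(s) is symmetric and satisfies ξᵀ B(s) ξ ≥ η₁ |ξ|² for all ξ ∈ ℝ^m (i.e. B(s) − η₁ I is positive semidefinite). Then the function s ↦ Tr(B(s)^{1/2}) is differentiable on [0,1] with derivative (d/ds) Tr(B(s)^{1/2}) = (1/2) Tr((B(s)^{1/2})^{−1} B'(s)), where B(s)^{1/2} denotes the unique symmetric positive semidefinite square root of the symmetric positive definite matrix B(s). -/

import Mathlib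

open Matrix

namespace Stmt15Aux

attribute [local instance] Matrix.linftyOpNormedRing Matrix.linftyOpNormedAlgebra

variable {m : ℕ}

/-- trace of `Aᵀ * M` as a double sum. -/
lemma trace_transpose_mul (A M : Matrix (Fin m) (Fin m) ℝ) :
    Matrix.trace (Aᵀ * M) = ∑ i, ∑ j, A i j * M i j := by
  simp only [Matrix.trace, Matrix.diag, Matrix.mul_apply, Matrix.transpose_apply]
  rw [Finset.sum_comm]

lemma trace_psd_nonneg {A : Matrix (Fin m) (Fin m) ℝ} (hA : A.PosSemidef) :
    0 ≤ Matrix.trace A := by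
  refine Finset.sum_nonneg fun i _ => ?_
  exact hA.diag_nonneg

section
open scoped MatrixOrder
lemma trace_psd_mul_nonneg {A C : Matrix (Fin m) (Fin m) ℝ} (hA : A.PosSemidef)
    (hC : C.PosSemidef) : 0 ≤ Matrix.trace (A * C) := by
  have h1 : A = CFC.sqrt A * CFC.sqrt A := (CFC.sqrt_mul_sqrt_self A hA.nonneg).symm
  have h2 : (CFC.sqrt A).PosSemidef := (CFC.sqrt_nonneg A).posSemidef
  have h3 : Matrix.trace (A * C) = Matrix.trace (CFC.sqrt A * C * CFC.sqrt A) := by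
    conv_lhs => rw [h1]
    rw [Matrix.mul_assoc, Matrix.trace_mul_comm]
  rw [h3]
  have h4 : CFC.sqrt A * C * CFC.sqrt A = CFC.sqrt A * C * (CFC.sqrt A)ᴴ := by
    rw [h2.1.eq]
  rw [h4]
  exact trace_psd_nonneg (hC.mul_mul_conjTranspose_same (CFC.sqrt A))
end


lemma conjTranspose_eq_transpose' (H : Matrix (Fin m) (Fin m) ℝ) : Hᴴ = Hᵀ := by
  ext i j; simp [Matrix.conjTranspose_apply]

/-- Key coercivity estimate for the Sylvester operator. -/
lemma key_coercive {P Q : Matrix (Fin m) (Fin m) ℝ} {c : ℝ}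
    (hP : (P - c • 1).PosSemidef) (hQ : (Q - c • 1).PosSemidef)
    (H : Matrix (Fin m) (Fin m) ℝ) :
    2 * c * (∑ i, ∑ j, (H i j) ^ 2) ≤ Matrix.trace (Hᵀ * (P * H + H * Q)) := by
  have hHH : Matrix.trace (Hᵀ * H) = ∑ i, ∑ j, (H i j) ^ 2 := by
    rw [trace_transpose_mul]; simp [pow_two]
  have hsplit : Hᵀ * (P * H + H * Q)
      = Hᵀ * (P - c • 1) * H + (Hᵀ * H) * (Q - c • 1) + (2 * c) • (Hᵀ * H) := by
    simp only [Matrix.mul_sub, Matrix.sub_mul, Matrix.mul_add, Matrix.mul_smul,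
      Matrix.smul_mul, Matrix.mul_one, Matrix.one_mul, Matrix.mul_assoc]
    module
  have h1 : 0 ≤ Matrix.trace (Hᵀ * (P - c • 1) * H) := by
    have := hP.conjTranspose_mul_mul_same H
    rw [conjTranspose_eq_transpose'] at this
    exact trace_psd_nonneg this
  have h2 : 0 ≤ Matrix.trace ((Hᵀ * H) * (Q - c • 1)) := by
    have hH2 : (Hᵀ * H).PosSemidef := by
      have := Matrix.posSemidef_conjTranspose_mul_self H
      rwa [conjTranspose_eq_transpose'] at this
    exact trace_psd_mul_nonneg hH2 hQ
  rw [hsplit]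
  simp only [Matrix.trace_add, Matrix.trace_smul, smul_eq_mul, hHH]
  linarith

/-- entrywise bound for solutions of the Sylvester equation. -/
lemma entry_bound {P Q M H : Matrix (Fin m) (Fin m) ℝ} {c : ℝ} (hc : 0 < c)
    (hP : (P - c • 1).PosSemidef) (hQ : (Q - c • 1).PosSemidef)
    (hM : P * H + H * Q = M) (i j : Fin m) :
    |H i j| ≤ Real.sqrt (∑ i, ∑ j, (M i j) ^ 2) / (2 * c) := by
  set a : ℝ := Real.sqrt (∑ i, ∑ j, (H i j) ^ 2) with ha
  set b : ℝ := Real.sqrt (∑ i, ∑ j, (M i j) ^ 2) with hb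
  have hsumnn : (0:ℝ) ≤ ∑ i, ∑ j, (H i j) ^ 2 :=
    Finset.sum_nonneg fun _ _ => Finset.sum_nonneg fun _ _ => sq_nonneg _
  have ha2 : a ^ 2 = ∑ i, ∑ j, (H i j) ^ 2 := Real.sq_sqrt hsumnn
  have hCS : Matrix.trace (Hᵀ * M) ≤ a * b := by
    rw [trace_transpose_mul, ← Finset.sum_product']
    have := Real.sum_mul_le_sqrt_mul_sqrt (Finset.univ : Finset (Fin m × Fin m))
      (fun p => H p.1 p.2) (fun p => M p.1 p.2)
    convert this using 2
    · exact Finset.univ_product_univ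
    · rw [ha, ← Finset.sum_product', Finset.univ_product_univ]
    · rw [hb, ← Finset.sum_product', Finset.univ_product_univ]
  have hkey := key_coercive hP hQ H
  rw [hM] at hkey
  have hmain : 2 * c * a ^ 2 ≤ a * b := by rw [ha2]; exact le_trans hkey hCS
  have hab : a ≤ b / (2 * c) := by
    rcases eq_or_lt_of_le (Real.sqrt_nonneg _ : 0 ≤ a) with h | h
    · rw [ha, ← h]; positivity
    · rw [le_div_iff₀ (by positivity)]
      nlinarith
  have hHa : |H i j| ≤ a := by
    rw [ha, ← Real.sqrt_sq_eq_abs]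
    apply Real.sqrt_le_sqrt
    calc (H i j)^2 ≤ ∑ j', (H i j') ^ 2 :=
          Finset.single_le_sum (f := fun j' => H i j' ^ 2)
            (fun _ _ => sq_nonneg _) (Finset.mem_univ j)
    _ ≤ ∑ i', ∑ j', (H i' j') ^ 2 :=
          Finset.single_le_sum (f := fun i' => ∑ j', (H i' j') ^ 2)
            (fun _ _ => Finset.sum_nonneg fun _ _ => sq_nonneg _) (Finset.mem_univ i)
  exact hHa.trans hab


/-- If `T` is psd and `T*T` has quadratic form bounded below by `η`, then `T ≥ √η`. -/
lemma sqrt_lower {T : Matrix (Fin m) (Fin m) ℝ} (hT : T.PosSemidef) {η : ℝ} (hη : 0 ≤ η)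
    (hbd : ∀ ξ : Fin m → ℝ, η * (∑ i, (ξ i) ^ 2) ≤ dotProduct ξ ((T * T) *ᵥ ξ)) :
    (T - Real.sqrt η • 1).PosSemidef := by
  have hH := hT.1
  set ν := hH.eigenvalues with hν
  have hev : ∀ i, Real.sqrt η ≤ ν i := by
    intro i
    set v : Fin m → ℝ := ⇑(hH.eigenvectorBasis i) with hv
    have hnorm : ∑ k, (v k) ^ 2 = 1 := by
      have h1 : ‖hH.eigenvectorBasis i‖ = 1 := hH.eigenvectorBasis.orthonormal.1 i
      have h2 : ‖hH.eigenvectorBasis i‖ = Real.sqrt (∑ k, (v k) ^ 2) := by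
        rw [EuclideanSpace.norm_eq]
        congr 1
        refine Finset.sum_congr rfl fun k _ => ?_
        rw [Real.norm_eq_abs, sq_abs]
      have h3 : Real.sqrt (∑ k, (v k) ^ 2) = 1 := by rw [← h2, h1]
      have h4 := congrArg (· ^ 2) h3
      simpa [Real.sq_sqrt (Finset.sum_nonneg fun _ _ => sq_nonneg _)] using h4
    have hmv : T *ᵥ v = ν i • v := hH.mulVec_eigenvectorBasis i
    have hquad : dotProduct v ((T * T) *ᵥ v) = ν i ^ 2 := by
      rw [← Matrix.mulVec_mulVec, hmv, Matrix.mulVec_smul, hmv, smul_smul]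
      rw [dotProduct_smul]
      simp only [smul_eq_mul, dotProduct]
      have : ∑ k, v k * v k = 1 := by simpa [pow_two] using hnorm
      rw [this, mul_one, pow_two]
    have := hbd v
    rw [hquad, hnorm, mul_one] at this
    have hνnn : 0 ≤ ν i := hT.eigenvalues_nonneg i
    calc Real.sqrt η ≤ Real.sqrt (ν i ^ 2) := Real.sqrt_le_sqrt this
    _ = ν i := Real.sqrt_sq hνnn
  -- now use the spectral theorem
  set U : Matrix (Fin m) (Fin m) ℝ := (hH.eigenvectorUnitary : Matrix (Fin m) (Fin m) ℝ) with hU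
  have hUU : U * star U = 1 := Matrix.mem_unitaryGroup_iff.mp hH.eigenvectorUnitary.2
  have hspec : T = U * Matrix.diagonal ν * star U := by
    simpa [hU, hν] using hH.spectral_theorem
  have hone : (Real.sqrt η • 1 : Matrix (Fin m) (Fin m) ℝ)
      = U * (Real.sqrt η • 1) * star U := by
    rw [Matrix.mul_smul, Matrix.mul_one, Matrix.smul_mul, hUU]
  have hdiff : T - Real.sqrt η • 1
      = U * Matrix.diagonal (fun i => ν i - Real.sqrt η) * star U := by
    rw [hspec]
    conv_lhs => rw [hone]
    rw [← Matrix.sub_mul, ← Matrix.mul_sub]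
    congr 2
    rw [Matrix.smul_one_eq_diagonal, Matrix.diagonal_sub]
  rw [hdiff]
  have hd : (Matrix.diagonal (fun i => ν i - Real.sqrt η)).PosSemidef :=
    Matrix.PosSemidef.diagonal (fun i => sub_nonneg.mpr (hev i))
  have := hd.mul_mul_conjTranspose_same U
  rwa [← Matrix.star_eq_conjTranspose] at this


lemma matrix_eq_sum_smul (x : Matrix (Fin m) (Fin m) ℝ) :
    x = ∑ i, ∑ j, x i j • Matrix.single i j (1:ℝ) := by
  conv_lhs => rw [Matrix.matrix_eq_sum_single x]
  refine Finset.sum_congr rfl fun i _ => Finset.sum_congr rfl fun j _ => ?_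
  rw [Matrix.smul_single, smul_eq_mul, mul_one]

lemma hasDerivWithinAt_of_entries {f : ℝ → Matrix (Fin m) (Fin m) ℝ}
    {A : Matrix (Fin m) (Fin m) ℝ} {t : Set ℝ} {x : ℝ}
    (h : ∀ i j, HasDerivWithinAt (fun r => f r i j) (A i j) t x) :
    HasDerivWithinAt f A t x := by
  have main : HasDerivWithinAt (fun r => ∑ i, ∑ j, f r i j • Matrix.single i j (1:ℝ))
      (∑ i, ∑ j, A i j • Matrix.single i j (1:ℝ)) t x := by
    refine HasDerivWithinAt.fun_sum fun i _ => HasDerivWithinAt.fun_sum fun j _ => ?_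
    exact (h i j).smul_const _
  have h1 : (fun r => ∑ i, ∑ j, f r i j • Matrix.single i j (1:ℝ)) = f := by
    funext r; exact (matrix_eq_sum_smul (f r)).symm
  rw [h1, ← matrix_eq_sum_smul A] at main
  exact main

lemma continuousWithinAt_of_entries {f : ℝ → Matrix (Fin m) (Fin m) ℝ} {t : Set ℝ} {x : ℝ}
    (h : ∀ i j, ContinuousWithinAt (fun r => f r i j) t x) :
    ContinuousWithinAt f t x := by
  have main : ContinuousWithinAt
      (fun r => ∑ i, ∑ j, f r i j • Matrix.single i j (1:ℝ)) t x := by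
    apply tendsto_finset_sum
    intro i _
    apply tendsto_finset_sum
    intro j _
    exact (h i j).smul continuousWithinAt_const
  have h1 : (fun r => ∑ i, ∑ j, f r i j • Matrix.single i j (1:ℝ)) = f := by
    funext r; exact (matrix_eq_sum_smul (f r)).symm
  rw [h1] at main
  exact main

end Stmt15Aux

attribute [local instance] Matrix.linftyOpNormedRing Matrix.linftyOpNormedAlgebra

open Filter Topology

/-- If `B : [0,1] → ℝ^{m×m}` is continuously differentiable (with derivative
`B'`), each `B(s)` is symmetric with `ξᵀ B(s) ξ ≥ η₁ |ξ|²` for all `ξ`, and `S s` is the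
unique symmetric positive semidefinite square root of `B(s)`, then `s ↦ Tr(B(s)^{1/2})`
is differentiable on `[0,1]` with derivative `(1/2) Tr((B(s)^{1/2})⁻¹ B'(s))`. -/
theorem stmt_15 (m : ℕ) (hm : 1 ≤ m) (η₁ : ℝ) (hη : 0 < η₁)
    (B B' S : ℝ → Matrix (Fin m) (Fin m) ℝ)
    (hB' : ∀ s ∈ Set.Icc (0 : ℝ) 1, ∀ i j : Fin m,
      HasDerivWithinAt (fun r => B r i j) (B' s i j) (Set.Icc 0 1) s)
    (hB'cont : ∀ i j : Fin m, ContinuousOn (fun s => B' s i j) (Set.Icc 0 1))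
    (hsym : ∀ s ∈ Set.Icc (0 : ℝ) 1, (B s).IsSymm)
    (hbd : ∀ s ∈ Set.Icc (0 : ℝ) 1, ∀ ξ : Fin m → ℝ,
      η₁ * (∑ i, (ξ i) ^ 2) ≤ dotProduct ξ ((B s).mulVec ξ))
    (hS : ∀ s ∈ Set.Icc (0 : ℝ) 1, (S s).PosSemidef ∧ S s * S s = B s) :
    ∀ s ∈ Set.Icc (0 : ℝ) 1,
      HasDerivWithinAt (fun r => Matrix.trace (S r))
        ((1 / 2) * Matrix.trace ((S s)⁻¹ * B' s)) (Set.Icc 0 1) s := by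
  intro s hs
  classical
  have hc : (0:ℝ) < Real.sqrt η₁ := Real.sqrt_pos.mpr hη
  set c := Real.sqrt η₁ with hcdef
  have hlow : ∀ r ∈ Set.Icc (0:ℝ) 1, (S r - c • 1).PosSemidef := by
    intro r hr
    refine Stmt15Aux.sqrt_lower (hS r hr).1 (le_of_lt hη) ?_
    intro ξ
    rw [(hS r hr).2]
    exact hbd r hr ξ
  set S₀ := S s with hS₀def
  have hS₀ := (hS s hs).1
  have hB₀ : S₀ * S₀ = B s := (hS s hs).2
  -- S₀ is positive definite
  have hpd : S₀.PosDef := by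
    refine Matrix.PosDef.of_dotProduct_mulVec_pos hS₀.1 fun x hx => ?_
    have h1 := (hlow s hs).dotProduct_mulVec_nonneg x
    have hcx : ((c • 1 : Matrix (Fin m) (Fin m) ℝ)) *ᵥ x = c • x := by
      rw [Matrix.smul_mulVec, Matrix.one_mulVec]
    have hxx : dotProduct (star x) (S₀ *ᵥ x)
        = dotProduct (star x) ((S₀ - c • 1) *ᵥ x) + c * ∑ i, x i ^ 2 := by
      rw [Matrix.sub_mulVec, dotProduct_sub, hcx]
      have h2 : dotProduct (star x) (c • x) = c * ∑ i, x i ^ 2 := by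
        simp only [star_trivial, dotProduct, Pi.smul_apply, smul_eq_mul, Finset.mul_sum]
        exact Finset.sum_congr rfl fun k _ => by ring
      rw [h2]; ring
    have hxpos : 0 < ∑ i, x i ^ 2 := by
      rcases Function.ne_iff.mp hx with ⟨i, hi⟩
      have hi' : x i ≠ 0 := hi
      have h3 : 0 < x i ^ 2 := by positivity
      exact lt_of_lt_of_le h3 (Finset.single_le_sum (f := fun i => x i ^ 2)
        (fun _ _ => sq_nonneg _) (Finset.mem_univ i))
    rw [hxx]
    nlinarith [mul_pos hc hxpos]
  -- continuity of S at s within Icc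
  have hBc : ∀ i j, ContinuousWithinAt (fun r => B r i j) (Set.Icc 0 1) s :=
    fun i j => (hB' s hs i j).continuousWithinAt
  have hg0 : Tendsto (fun r => Real.sqrt (∑ i, ∑ j, ((B r - B s) i j) ^ 2) / (2 * c))
      (𝓝[Set.Icc (0:ℝ) 1] s) (𝓝 0) := by
    have h1 : Tendsto (fun r => ∑ i, ∑ j, ((B r - B s) i j) ^ 2)
        (𝓝[Set.Icc (0:ℝ) 1] s) (𝓝 (∑ i, ∑ j, ((B s - B s) i j) ^ 2)) := by
      apply tendsto_finset_sum
      intro i _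
      apply tendsto_finset_sum
      intro j _
      have : ContinuousWithinAt (fun r => ((B r - B s) i j) ^ 2) (Set.Icc 0 1) s := by
        simp only [Matrix.sub_apply]
        exact ((hBc i j).sub continuousWithinAt_const).pow 2
      exact this
    have h2 : (∑ i, ∑ j, ((B s - B s) i j) ^ 2) = 0 := by simp
    rw [h2] at h1
    have h3 : Tendsto (fun r => Real.sqrt (∑ i, ∑ j, ((B r - B s) i j) ^ 2))
        (𝓝[Set.Icc (0:ℝ) 1] s) (𝓝 (Real.sqrt 0)) :=
      (Real.continuous_sqrt.continuousAt).tendsto.comp h1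
    rw [Real.sqrt_zero] at h3
    simpa using h3.div_const (2 * c)
  have hSentry : ∀ i j, ContinuousWithinAt (fun r => S r i j) (Set.Icc 0 1) s := by
    intro i j
    rw [ContinuousWithinAt, tendsto_iff_dist_tendsto_zero]
    refine squeeze_zero' (Filter.Eventually.of_forall fun r => dist_nonneg) ?_ hg0
    filter_upwards [self_mem_nhdsWithin] with r hr
    have hM : S r * (S r - S₀) + (S r - S₀) * S₀ = B r - B s := by
      rw [Matrix.mul_sub, Matrix.sub_mul, hB₀, (hS r hr).2]; abel
    have hE := Stmt15Aux.entry_bound hc (hlow r hr) (hlow s hs) hM i j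
    rw [Real.dist_eq]
    simpa [Matrix.sub_apply] using hE
  have hSc : ContinuousWithinAt S (Set.Icc 0 1) s :=
    Stmt15Aux.continuousWithinAt_of_entries hSentry
  -- derivative of B
  have hBd : HasDerivWithinAt B (B' s) (Set.Icc 0 1) s :=
    Stmt15Aux.hasDerivWithinAt_of_entries (fun i j => hB' s hs i j)
  -- the Sylvester operator as a continuous linear equivalence
  set L : Matrix (Fin m) (Fin m) ℝ →ₗ[ℝ] Matrix (Fin m) (Fin m) ℝ :=
    LinearMap.mulLeft ℝ S₀ + LinearMap.mulRight ℝ S₀ with hLdef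
  have hLapp : ∀ H, L H = S₀ * H + H * S₀ := fun H => rfl
  have hLinj : Function.Injective L := by
    intro H₁ H₂ h12
    have h0 : L (H₁ - H₂) = 0 := by rw [map_sub, h12, sub_self]
    have hsyl : S₀ * (H₁ - H₂) + (H₁ - H₂) * S₀ = 0 := by rw [← hLapp]; exact h0
    have hkey := Stmt15Aux.key_coercive (hlow s hs) (hlow s hs) (H₁ - H₂)
    rw [hsyl] at hkey
    simp only [Matrix.mul_zero, Matrix.trace_zero] at hkey
    have hsum : ∑ i, ∑ j, ((H₁ - H₂) i j) ^ 2 ≤ 0 := by nlinarith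
    have h1 : ∑ i, ∑ j, ((H₁ - H₂) i j) ^ 2 = 0 := le_antisymm hsum (by positivity)
    have hz : H₁ - H₂ = 0 := by
      ext i j
      have h2 := (Finset.sum_eq_zero_iff_of_nonneg
        (fun _ _ => Finset.sum_nonneg fun _ _ => sq_nonneg _)).mp h1 i (Finset.mem_univ i)
      have h3 := (Finset.sum_eq_zero_iff_of_nonneg
        (fun _ _ => sq_nonneg _)).mp h2 j (Finset.mem_univ j)
      simpa using pow_eq_zero_iff (n := 2) (by norm_num) |>.mp h3
    exact sub_eq_zero.mp hz
  have hLsurj := LinearMap.injective_iff_surjective.mp hLinj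
  set Leq : Matrix (Fin m) (Fin m) ℝ ≃ₗ[ℝ] Matrix (Fin m) (Fin m) ℝ :=
    LinearEquiv.ofBijective L ⟨hLinj, hLsurj⟩ with hLeqdef
  set Lc : Matrix (Fin m) (Fin m) ℝ ≃L[ℝ] Matrix (Fin m) (Fin m) ℝ :=
    Leq.toContinuousLinearEquiv with hLcdef
  -- strict derivative of the squaring map
  have hsq : HasStrictFDerivAt (fun A : Matrix (Fin m) (Fin m) ℝ => A * A)
      (Lc : Matrix (Fin m) (Fin m) ℝ →L[ℝ] Matrix (Fin m) (Fin m) ℝ) S₀ := by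
    have hb := (ContinuousLinearMap.mul ℝ (Matrix (Fin m) (Fin m) ℝ)).isBoundedBilinearMap
    have h1 := hb.hasStrictFDerivAt (S₀, S₀)
    have h2 : HasStrictFDerivAt (fun A : Matrix (Fin m) (Fin m) ℝ => (A, A))
        ((ContinuousLinearMap.id ℝ _).prod (ContinuousLinearMap.id ℝ _)) S₀ :=
      (hasStrictFDerivAt_id S₀).prodMk (hasStrictFDerivAt_id S₀)
    have h3 := HasStrictFDerivAt.comp (f := fun A : Matrix (Fin m) (Fin m) ℝ => (A, A)) S₀ h1 h2
    have hclm : (hb.deriv (S₀, S₀)).comp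
        ((ContinuousLinearMap.id ℝ (Matrix (Fin m) (Fin m) ℝ)).prod (ContinuousLinearMap.id ℝ _))
        = (Lc : Matrix (Fin m) (Fin m) ℝ →L[ℝ] Matrix (Fin m) (Fin m) ℝ) := by
      ext H : 1
      rfl
    rw [← hclm]
    exact h3
  set g := hsq.localInverse _ _ _ with hgdef
  have hgS : ∀ᶠ x in 𝓝 S₀, g (x * x) = x := hsq.eventually_left_inverse
  have hev : ∀ᶠ r in 𝓝[Set.Icc (0:ℝ) 1] s, S r = g (B r) := by
    filter_upwards [hSc.eventually hgS, self_mem_nhdsWithin] with r h1 hr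
    rw [← (hS r hr).2]
    exact h1.symm
  have hg' : HasStrictFDerivAt g
      (Lc.symm : Matrix (Fin m) (Fin m) ℝ →L[ℝ] Matrix (Fin m) (Fin m) ℝ) (B s) := by
    have h4 := hsq.to_localInverse
    rwa [hB₀] at h4
  have hcomp : HasDerivWithinAt (fun r => g (B r)) (Lc.symm (B' s)) (Set.Icc 0 1) s :=
    hg'.hasFDerivAt.comp_hasDerivWithinAt s hBd
  have hSd : HasDerivWithinAt S (Lc.symm (B' s)) (Set.Icc 0 1) s := by
    refine hcomp.congr_of_eventuallyEq hev ?_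
    rw [← hB₀]
    exact hsq.localInverse_apply_image.symm
  set H := Lc.symm (B' s) with hHdef
  -- pass to the trace
  have htr : HasDerivWithinAt (fun r => Matrix.trace (S r)) (Matrix.trace H)
      (Set.Icc 0 1) s := by
    have hT := ((Matrix.traceLinearMap (Fin m) ℝ ℝ).toContinuousLinearMap.hasFDerivAt
      (x := S₀)).comp_hasDerivWithinAt s hSd
    exact hT
  -- final algebraic identity
  have hLH : S₀ * H + H * S₀ = B' s := by
    have h1 : Lc H = B' s := Lc.apply_symm_apply (B' s)
    rw [← hLapp]
    have h2 : Lc H = L H := by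
      rw [hLcdef, LinearEquiv.coe_toContinuousLinearEquiv', hLeqdef]
      rfl
    rw [← h2, h1]
  have hdet : IsUnit S₀.det := hpd.det_pos.ne'.isUnit
  have hfin : Matrix.trace (S₀⁻¹ * B' s) = 2 * Matrix.trace H := by
    rw [← hLH, Matrix.mul_add, Matrix.trace_add, ← Matrix.mul_assoc,
      Matrix.nonsing_inv_mul _ hdet, Matrix.one_mul, ← Matrix.mul_assoc,
      Matrix.trace_mul_cycle, Matrix.mul_nonsing_inv _ hdet, Matrix.one_mul]
    ring
  have : (1 / 2 : ℝ) * Matrix.trace (S₀⁻¹ * B' s) = Matrix.trace H := by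
    rw [hfin]; ring
  rw [this]
  exact htr
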